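/- If the complete graph K_k admits a t-biclique covering of size d, then k ≤ 1 + Σ_{s=1}^{t} 2^{s-1}·C(d,s). -/

import Mathlib

/-- `crossAdj U W u v` : `u` and `v` are on opposite sides of the biclique `B(U,W)`. -/
def crossAdj {V : Type*} (U W : Set V) (u v : V) : Prop :=
  (u ∈ U ∧ v ∈ W) ∨ (u ∈ W ∧ v ∈ U)

/-- `B` is a partition of the edge set of `G` into `k` complete bipartite graphs:
every cross pair of each biclique is an edge of `G`, and every edge of `G` lies in
exactly one of the bicliques. -/
def IsBicliquePartition {V : Type*} (G : SimpleGraph V) {k : ℕ}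
    (B : Fin k → Set V × Set V) : Prop :=
  (∀ i, Disjoint (B i).1 (B i).2) ∧
  (∀ i, ∀ u v, crossAdj (B i).1 (B i).2 u v → G.Adj u v) ∧
  (∀ u v, G.Adj u v → ∃! i, crossAdj (B i).1 (B i).2 u v)

/-- A `t`-biclique covering of `G` of size `k`: every edge is covered at least once and
at most `t` times by the bicliques `B i`. -/
def IsBicliqueCover {V : Type*} (t : ℕ) (G : SimpleGraph V) {k : ℕ}
    (B : Fin k → Set V × Set V) : Prop :=
  (∀ i, Disjoint (B i).1 (B i).2) ∧
  (∀ i, ∀ u v, crossAdj (B i).1 (B i).2 u v → G.Adj u v) ∧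
  (∀ u v, G.Adj u v →
    1 ≤ Nat.card {i : Fin k // crossAdj (B i).1 (B i).2 u v} ∧
    Nat.card {i : Fin k // crossAdj (B i).1 (B i).2 u v} ≤ t)

open Finset
open scoped Classical

namespace BCCover

variable {k d : ℕ} (B : Fin d → Set (Fin k) × Set (Fin k))

noncomputable def chi (s : Bool) (i : Fin d) (v : Fin k) : ℝ :=
  if v ∈ (if s then (B i).1 else (B i).2) then 1 else 0

noncomputable def mu (ε : Fin d → Option Bool) (v : Fin k) : ℝ :=
  ∏ i, ((ε i).elim 1 fun s => chi B s i v)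

def cmp (ε : Fin d → Option Bool) : Fin d → Option Bool := fun i => (ε i).map not

def supp (ε : Fin d → Option Bool) : Finset (Fin d) :=
  univ.filter fun i => (ε i).isSome

noncomputable def T (ε : Fin d → Option Bool) (u v : Fin k) : ℝ :=
  mu B ε u * mu B (cmp ε) v

noncomputable def mm (u v : Fin k) : ℝ :=
  ∑ i, ∑ s, chi B s i u * chi B (!s) i v

lemma cmp_cmp (ε : Fin d → Option Bool) : cmp (cmp ε) = ε := by
  funext i
  cases h : ε i <;> simp [cmp, h]

lemma supp_cmp (ε : Fin d → Option Bool) : supp (cmp ε) = supp ε := by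
  simp [supp, cmp]

lemma cmp_update (ε : Fin d → Option Bool) (i : Fin d) (o : Option Bool) :
    cmp (Function.update ε i o) = Function.update (cmp ε) i (o.map not) := by
  funext j
  rcases eq_or_ne j i with rfl | h
  · simp [cmp]
  · simp [cmp, Function.update_of_ne h]

lemma chi_mul_self (s : Bool) (i : Fin d) (v : Fin k) :
    chi B s i v * chi B s i v = chi B s i v := by
  unfold chi
  by_cases h : v ∈ (if s then (B i).1 else (B i).2) <;> simp [h]

lemma chi_mul_not (hd : ∀ i, Disjoint (B i).1 (B i).2) (s : Bool) (i : Fin d) (v : Fin k) :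
    chi B s i v * chi B (!s) i v = 0 := by
  have hD := Set.disjoint_left.mp (hd i)
  cases s <;> unfold chi <;>
    by_cases h1 : v ∈ (B i).1 <;> by_cases h2 : v ∈ (B i).2 <;> simp_all

lemma mu_factor (ε : Fin d → Option Bool) (i : Fin d) (v : Fin k) :
    mu B ε v = ((ε i).elim 1 fun s => chi B s i v) *
      ∏ j ∈ univ.erase i, ((ε j).elim 1 fun s => chi B s j v) := by
  rw [mu, ← Finset.mul_prod_erase univ _ (mem_univ i)]

lemma mu_update (ε : Fin d → Option Bool) (i : Fin d) (o : Option Bool) (v : Fin k) :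
    mu B (Function.update ε i o) v = (o.elim 1 fun s => chi B s i v) *
      ∏ j ∈ univ.erase i, ((ε j).elim 1 fun s => chi B s j v) := by
  rw [mu_factor B _ i]
  simp only [Function.update_self]
  congr 1
  apply Finset.prod_congr rfl
  intro j hj
  rw [Function.update_of_ne (mem_erase.mp hj).1]

lemma L1 {ε : Fin d → Option Bool} {i : Fin d} (h : ε i = none) (s : Bool) (v : Fin k) :
    chi B s i v * mu B ε v = mu B (Function.update ε i (some s)) v := by
  rw [mu_update, mu_factor B ε i, h]
  simp [mul_assoc]

lemma L2 {ε : Fin d → Option Bool} {i : Fin d} {s : Bool} (h : ε i = some s) (v : Fin k) :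
    chi B s i v * mu B ε v = mu B ε v := by
  rw [mu_factor B ε i, h]
  simp only [Option.elim]
  rw [← mul_assoc, chi_mul_self]

lemma L3 (hd : ∀ i, Disjoint (B i).1 (B i).2) {ε : Fin d → Option Bool} {i : Fin d} {s : Bool}
    (h : ε i = some (!s)) (v : Fin k) :
    chi B s i v * mu B ε v = 0 := by
  rw [mu_factor B ε i, h]
  simp only [Option.elim]
  rw [← mul_assoc, chi_mul_not B hd]
  simp


lemma mem_supp {ε : Fin d → Option Bool} {i : Fin d} : i ∈ supp ε ↔ (ε i).isSome := by
  simp [supp]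

lemma supp_compl (ε : Fin d → Option Bool) :
    (supp ε)ᶜ = univ.filter fun i => ε i = none := by
  ext i
  simp [supp, Option.isSome_iff_ne_none]

lemma supp_update_none (ε : Fin d → Option Bool) (i : Fin d) :
    supp (Function.update ε i none) = (supp ε).erase i := by
  ext j
  rcases eq_or_ne j i with rfl | h
  · simp [supp]
  · simp [supp, Function.update_of_ne h, h]

lemma mul_T (hd : ∀ i, Disjoint (B i).1 (B i).2) (ε : Fin d → Option Bool) (u v : Fin k) :
    mm B u v * T B ε u v =
      ((supp ε).card : ℝ) * T B ε u v +
      ∑ i ∈ (supp ε)ᶜ, ∑ s, T B (Function.update ε i (some s)) u v := by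
  rw [mm, Finset.sum_mul, ← Finset.sum_add_sum_compl (supp ε)]
  congr 1
  · have per : ∀ i ∈ supp ε,
        (∑ s, chi B s i u * chi B (!s) i v) * T B ε u v = T B ε u v := by
      intro i hi
      obtain ⟨b, hb⟩ := Option.isSome_iff_exists.mp (mem_supp.mp hi)
      have hcmp : cmp ε i = some (!b) := by simp [cmp, hb]
      rw [Fintype.sum_bool]
      cases b
      · have t1 : chi B true i u * mu B ε u = 0 := L3 B hd (by simpa using hb) u
        have t2 : chi B false i u * mu B ε u = mu B ε u := L2 B hb u
        have t3 : chi B true i v * mu B (cmp ε) v = mu B (cmp ε) v :=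
          L2 B (by simpa using hcmp) v
        rw [add_mul]
        unfold T
        calc chi B true i u * chi B (!true) i v * (mu B ε u * mu B (cmp ε) v) +
              chi B false i u * chi B (!false) i v * (mu B ε u * mu B (cmp ε) v)
            = (chi B true i u * mu B ε u) * (chi B (!true) i v * mu B (cmp ε) v) +
              (chi B false i u * mu B ε u) * (chi B (!false) i v * mu B (cmp ε) v) := by ring
          _ = mu B ε u * mu B (cmp ε) v := by
              rw [t1, t2]
              simp only [Bool.not_false]
              rw [t3]
              ring
      · have t1 : chi B false i u * mu B ε u = 0 := L3 B hd (by simpa using hb) u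
        have t2 : chi B true i u * mu B ε u = mu B ε u := L2 B hb u
        have t3 : chi B false i v * mu B (cmp ε) v = mu B (cmp ε) v :=
          L2 B (by simpa using hcmp) v
        rw [add_mul]
        unfold T
        calc chi B true i u * chi B (!true) i v * (mu B ε u * mu B (cmp ε) v) +
              chi B false i u * chi B (!false) i v * (mu B ε u * mu B (cmp ε) v)
            = (chi B true i u * mu B ε u) * (chi B (!true) i v * mu B (cmp ε) v) +
              (chi B false i u * mu B ε u) * (chi B (!false) i v * mu B (cmp ε) v) := by ring
          _ = mu B ε u * mu B (cmp ε) v := by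
              rw [t1, t2]
              simp only [Bool.not_true]
              rw [t3]
              ring
    rw [Finset.sum_congr rfl per, Finset.sum_const, nsmul_eq_mul]
  · apply Finset.sum_congr rfl
    intro i hi
    have hnone : ε i = none := by
      rw [supp_compl] at hi
      exact (Finset.mem_filter.mp hi).2
    have hcnone : cmp ε i = none := by simp [cmp, hnone]
    rw [Finset.sum_mul]
    apply Finset.sum_congr rfl
    intro s _
    unfold T
    have e1 : chi B s i u * mu B ε u = mu B (Function.update ε i (some s)) u :=
      L1 B hnone s u
    have e2 : chi B (!s) i v * mu B (cmp ε) v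
        = mu B (Function.update (cmp ε) i (some (!s))) v := L1 B hcnone (!s) v
    have e3 : cmp (Function.update ε i (some s)) = Function.update (cmp ε) i (some (!s)) := by
      rw [cmp_update]
      rfl
    calc chi B s i u * chi B (!s) i v * (mu B ε u * mu B (cmp ε) v)
        = (chi B s i u * mu B ε u) * (chi B (!s) i v * mu B (cmp ε) v) := by ring
      _ = mu B (Function.update ε i (some s)) u *
            mu B (cmp (Function.update ε i (some s))) v := by rw [e1, e2, e3]

def Good (r : ℕ) (g : Fin k → Fin k → ℝ) : Prop :=
  ∃ c : (Fin d → Option Bool) → ℝ,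
    (∀ ε, c (cmp ε) = c ε) ∧ (∀ ε, c ε ≠ 0 → (supp ε).card ≤ r) ∧
    ∀ u v, g u v = ∑ ε : Fin d → Option Bool, c ε * T B ε u v

lemma good_one : Good B 0 (fun _ _ => (1 : ℝ)) := by
  classical
  refine ⟨fun ε => if ε = (fun _ => none) then 1 else 0, ?_, ?_, ?_⟩
  · intro ε
    have hiff : cmp ε = (fun _ => none) ↔ ε = (fun _ => none) := by
      constructor
      · intro h
        have h2 := congrArg cmp h
        rw [cmp_cmp] at h2
        rw [h2]
        funext i
        simp [cmp]
      · intro h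
        rw [h]
        funext i
        simp [cmp]
    simp only [hiff]
  · intro ε hε
    by_cases h : ε = (fun _ => none)
    · subst h
      simp [supp]
    · simp [h] at hε
  · intro u v
    rw [Finset.sum_eq_single (fun _ => none : Fin d → Option Bool)]
    · have hcn : cmp (fun _ => none : Fin d → Option Bool) = (fun _ => none) := by
        funext i; simp [cmp]
      simp [T, hcn, mu]
    · intro b _ hb
      simp [hb]
    · intro h
      exact absurd (Finset.mem_univ _) h

lemma good_step (hd : ∀ i, Disjoint (B i).1 (B i).2) {r : ℕ} {g : Fin k → Fin k → ℝ}
    (hg : Good B r g) (x : ℝ) :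
    Good B (r + 1) (fun u v => (mm B u v - x) * g u v) := by
  classical
  obtain ⟨c, hsym, hsupp, hrep⟩ := hg
  refine ⟨fun δ => c δ * (((supp δ).card : ℝ) - x) +
      ∑ i ∈ supp δ, c (Function.update δ i none), ?_, ?_, ?_⟩
  · intro δ
    dsimp only
    rw [supp_cmp, hsym]
    congr 1
    apply Finset.sum_congr rfl
    intro i _
    have h2 : Function.update (cmp δ) i none = cmp (Function.update δ i none) := by
      rw [cmp_update]; rfl
    rw [h2, hsym]
  · intro δ hδ
    dsimp only at hδ
    by_contra hcard
    push_neg at hcard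
    have hc0 : c δ = 0 := by
      by_contra h
      exact absurd (hsupp δ h) (by omega)
    have hall : ∀ i ∈ supp δ, c (Function.update δ i none) = 0 := by
      intro i hi
      by_contra h
      have h3 := hsupp _ h
      rw [supp_update_none, Finset.card_erase_of_mem hi] at h3
      omega
    apply hδ
    rw [hc0, Finset.sum_eq_zero hall]
    ring
  · intro u v
    have key : ∀ ε : Fin d → Option Bool,
        (mm B u v - x) * (c ε * T B ε u v) =
          (c ε * (((supp ε).card : ℝ) - x)) * T B ε u v +
          c ε * (∑ i ∈ (supp ε)ᶜ, ∑ s, T B (Function.update ε i (some s)) u v) := by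
      intro ε
      have h := mul_T B hd ε u v
      calc (mm B u v - x) * (c ε * T B ε u v)
          = c ε * (mm B u v * T B ε u v) - x * (c ε * T B ε u v) := by ring
        _ = c ε * (((supp ε).card : ℝ) * T B ε u v +
              ∑ i ∈ (supp ε)ᶜ, ∑ s, T B (Function.update ε i (some s)) u v)
              - x * (c ε * T B ε u v) := by rw [h]
        _ = _ := by ring
    have reindex :
        (∑ ε : Fin d → Option Bool,
          c ε * (∑ i ∈ (supp ε)ᶜ, ∑ s, T B (Function.update ε i (some s)) u v)) =
        ∑ δ : Fin d → Option Bool,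
          (∑ i ∈ supp δ, c (Function.update δ i none)) * T B δ u v := by
      have LHSeq : ∀ ε : Fin d → Option Bool,
          c ε * (∑ i ∈ (supp ε)ᶜ, ∑ s, T B (Function.update ε i (some s)) u v)
          = ∑ i, ∑ s : Bool,
              (if ε i = none then c ε * T B (Function.update ε i (some s)) u v else 0) := by
        intro ε
        rw [Finset.mul_sum, supp_compl, Finset.sum_filter]
        apply Finset.sum_congr rfl
        intro i _
        by_cases h : ε i = none <;> simp [h, Finset.mul_sum, mul_add]
      have RHSeq : ∀ δ : Fin d → Option Bool,
          (∑ i ∈ supp δ, c (Function.update δ i none)) * T B δ u v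
          = ∑ i, ∑ s : Bool,
              (if δ i = some s then c (Function.update δ i none) * T B δ u v else 0) := by
        intro δ
        rw [Finset.sum_mul, supp, Finset.sum_filter]
        apply Finset.sum_congr rfl
        intro i _
        cases h : δ i with
        | none => simp [h]
        | some b =>
          simp only [h, Option.isSome_some, if_true]
          rw [Fintype.sum_bool]
          cases b <;> simp
      calc (∑ ε : Fin d → Option Bool,
              c ε * (∑ i ∈ (supp ε)ᶜ, ∑ s, T B (Function.update ε i (some s)) u v))
          = ∑ ε : Fin d → Option Bool, ∑ i, ∑ s : Bool,
              (if ε i = none then c ε * T B (Function.update ε i (some s)) u v else 0) :=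
            Finset.sum_congr rfl fun ε _ => LHSeq ε
        _ = ∑ i, ∑ s : Bool, ∑ ε : Fin d → Option Bool,
              (if ε i = none then c ε * T B (Function.update ε i (some s)) u v else 0) := by
            rw [Finset.sum_comm]
            exact Finset.sum_congr rfl fun i _ => Finset.sum_comm
        _ = ∑ i, ∑ s : Bool, ∑ δ : Fin d → Option Bool,
              (if δ i = some s then c (Function.update δ i none) * T B δ u v else 0) := by
            apply Finset.sum_congr rfl
            intro i _
            apply Finset.sum_congr rfl
            intro s _
            rw [← Finset.sum_filter, ← Finset.sum_filter]
            refine Finset.sum_nbij' (fun ε => Function.update ε i (some s))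
              (fun δ => Function.update δ i none) ?_ ?_ ?_ ?_ ?_
            · intro ε hε
              simp
            · intro δ hδ
              simp
            · intro ε hε
              simp only [Finset.mem_filter] at hε
              try dsimp only
              rw [Function.update_idem, ← hε.2, Function.update_eq_self]
            · intro δ hδ
              simp only [Finset.mem_filter] at hδ
              try dsimp only
              rw [Function.update_idem, ← hδ.2, Function.update_eq_self]
            · intro ε hε
              simp only [Finset.mem_filter] at hε
              try dsimp only
              rw [Function.update_idem, ← hε.2, Function.update_eq_self]
        _ = ∑ i, ∑ δ : Fin d → Option Bool, ∑ s : Bool,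
              (if δ i = some s then c (Function.update δ i none) * T B δ u v else 0) :=
            Finset.sum_congr rfl fun i _ => Finset.sum_comm
        _ = ∑ δ : Fin d → Option Bool, ∑ i, ∑ s : Bool,
              (if δ i = some s then c (Function.update δ i none) * T B δ u v else 0) :=
            Finset.sum_comm
        _ = _ := Finset.sum_congr rfl fun δ _ => (RHSeq δ).symm
    calc (mm B u v - x) * g u v
        = ∑ ε : Fin d → Option Bool, (mm B u v - x) * (c ε * T B ε u v) := by
          rw [hrep u v, Finset.mul_sum]
      _ = ∑ ε : Fin d → Option Bool,
            ((c ε * (((supp ε).card : ℝ) - x)) * T B ε u v +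
             c ε * (∑ i ∈ (supp ε)ᶜ, ∑ s, T B (Function.update ε i (some s)) u v)) :=
          Finset.sum_congr rfl fun ε _ => key ε
      _ = (∑ ε : Fin d → Option Bool, (c ε * (((supp ε).card : ℝ) - x)) * T B ε u v) +
          ∑ ε : Fin d → Option Bool,
            c ε * (∑ i ∈ (supp ε)ᶜ, ∑ s, T B (Function.update ε i (some s)) u v) := by
          rw [Finset.sum_add_distrib]
      _ = (∑ δ : Fin d → Option Bool, (c δ * (((supp δ).card : ℝ) - x)) * T B δ u v) +
          ∑ δ : Fin d → Option Bool,
            (∑ i ∈ supp δ, c (Function.update δ i none)) * T B δ u v := by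
          rw [reindex]
      _ = ∑ δ : Fin d → Option Bool,
            (c δ * (((supp δ).card : ℝ) - x) +
             ∑ i ∈ supp δ, c (Function.update δ i none)) * T B δ u v := by
          rw [← Finset.sum_add_distrib]
          exact Finset.sum_congr rfl fun δ _ => by ring

lemma good_prod (hd : ∀ i, Disjoint (B i).1 (B i).2) (t : ℕ) :
    Good B t (fun u v => ∏ j ∈ Icc 1 t, (mm B u v - (j : ℝ))) := by
  induction t with
  | zero =>
    simp only [show Finset.Icc 1 0 = (∅ : Finset ℕ) from rfl, Finset.prod_empty]
    exact good_one B
  | succ n ih =>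
    have h : (fun u v : Fin k => ∏ j ∈ Icc 1 (n + 1), (mm B u v - (j : ℝ))) =
        fun u v => (mm B u v - ((n + 1 : ℕ) : ℝ)) * ∏ j ∈ Icc 1 n, (mm B u v - (j : ℝ)) := by
      funext u v
      rw [Finset.prod_Icc_succ_top (by omega)]
      push_cast
      ring
    rw [h]
    exact good_step B hd ih _

lemma mm_self (hd : ∀ i, Disjoint (B i).1 (B i).2) (u : Fin k) : mm B u u = 0 := by
  unfold mm
  apply Finset.sum_eq_zero
  intro i _
  rw [Fintype.sum_bool]
  have h1 := chi_mul_not B hd true i u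
  have h2 := chi_mul_not B hd false i u
  simp only [Bool.not_true] at h1
  simp only [Bool.not_false] at h2
  simp only [Bool.not_true, Bool.not_false]
  rw [h1, h2, add_zero]

lemma mm_card (hd : ∀ i, Disjoint (B i).1 (B i).2) (u v : Fin k) :
    mm B u v = ((univ.filter fun i => crossAdj (B i).1 (B i).2 u v).card : ℝ) := by
  rw [← Finset.sum_boole]
  unfold mm
  apply Finset.sum_congr rfl
  intro i _
  have hD1 := Set.disjoint_left.mp (hd i)
  rw [Fintype.sum_bool]
  by_cases h1 : u ∈ (B i).1 <;> by_cases h2 : u ∈ (B i).2 <;>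
    by_cases h3 : v ∈ (B i).1 <;> by_cases h4 : v ∈ (B i).2 <;>
    first
    | exact (hD1 h1 h2).elim
    | exact (hD1 h3 h4).elim
    | simp [chi, crossAdj, h1, h2, h3, h4]

def Canon (ε : Fin d → Option Bool) : Prop :=
  ∀ i, (∀ j, j < i → ε j = none) → ε i ≠ some false

lemma canon_or (ε : Fin d → Option Bool) : Canon ε ∨ Canon (cmp ε) := by
  by_cases h : Canon ε
  · exact Or.inl h
  · right
    unfold Canon at h
    push_neg at h
    obtain ⟨i, hpre, hval⟩ := h
    intro i' hpre'
    rcases lt_trichotomy i' i with hlt | rfl | hgt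
    · have hn : ε i' = none := hpre _ hlt
      simp [cmp, hn]
    · simp [cmp, hval]
    · exfalso
      have hn : cmp ε i = none := hpre' i hgt
      simp [cmp, hval] at hn

lemma sum_Icc_one (f : ℕ → ℕ) (t : ℕ) :
    ∑ s ∈ Icc 1 t, f s = ∑ n ∈ range t, f (n + 1) := by
  induction t with
  | zero => simp
  | succ n ih => rw [Finset.sum_Icc_succ_top (by omega), ih, Finset.sum_range_succ]

lemma fiber_bound (t : ℕ) (S : Finset (Fin d)) :
    (((univ.filter fun ε : Fin d → Option Bool => (supp ε).card ≤ t ∧ Canon ε)).filter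
      (fun ε => supp ε = S)).card ≤ 2 ^ (S.card - 1) := by
  classical
  rcases S.eq_empty_or_nonempty with rfl | hne
  · simp only [Finset.card_empty]
    norm_num
    apply Finset.card_le_one.mpr
    intro ε hε ε' hε'
    simp only [Finset.mem_filter] at hε hε'
    have h1 : ∀ i, ε i = none := by
      intro i
      by_contra h
      have : i ∈ supp ε := mem_supp.mpr (Option.isSome_iff_ne_none.mpr h)
      rw [hε.2] at this
      exact absurd this (Finset.notMem_empty i)
    have h2 : ∀ i, ε' i = none := by
      intro i
      by_contra h
      have : i ∈ supp ε' := mem_supp.mpr (Option.isSome_iff_ne_none.mpr h)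
      rw [hε'.2] at this
      exact absurd this (Finset.notMem_empty i)
    funext i
    rw [h1 i, h2 i]
  · set i₀ := S.min' hne with hi₀
    have hmem : ∀ ε, ε ∈ ((univ.filter fun ε : Fin d → Option Bool =>
        (supp ε).card ≤ t ∧ Canon ε)).filter (fun ε => supp ε = S) →
        (∀ i, i ∈ S → ∃ b, ε i = some b) ∧ (∀ i, i ∉ S → ε i = none) ∧ ε i₀ = some true := by
      intro ε hε
      simp only [Finset.mem_filter, Finset.mem_univ, true_and] at hε
      obtain ⟨⟨hcard, hcanon⟩, hsupp⟩ := hε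
      have hin : ∀ i, i ∈ S → ∃ b, ε i = some b := by
        intro i hi
        rw [← hsupp] at hi
        exact Option.isSome_iff_exists.mp (mem_supp.mp hi)
      have hout : ∀ i, i ∉ S → ε i = none := by
        intro i hi
        rw [← hsupp] at hi
        exact Option.not_isSome_iff_eq_none.mp (fun h => hi (mem_supp.mpr h))
      refine ⟨hin, hout, ?_⟩
      have hpre : ∀ j, j < i₀ → ε j = none := by
        intro j hj
        apply hout
        intro hjS
        exact absurd (S.min'_le j hjS) (not_le.mpr hj)
      have := hcanon i₀ hpre
      obtain ⟨b, hb⟩ := hin i₀ (S.min'_mem hne)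
      cases b
      · exact absurd hb this
      · exact hb
    refine le_trans (Finset.card_le_card_of_injOn
      (fun ε i => (ε i).getD true)
      (t := Fintype.piFinset fun i =>
        if i ∈ S.erase i₀ then ({true, false} : Finset Bool) else {true})
      ?_ ?_) (le_of_eq ?_)
    rotate_left
    rotate_left
    · rw [Fintype.card_piFinset]
      have : ∀ i : Fin d, ((if i ∈ S.erase i₀ then ({true, false} : Finset Bool)
          else {true}) : Finset Bool).card = if i ∈ S.erase i₀ then 2 else 1 := by
        intro i
        split <;> simp
      rw [Finset.prod_congr rfl fun i _ => this i]
      have h2 : (∏ i : Fin d, if i ∈ S.erase i₀ then 2 else 1)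
          = 2 ^ (S.erase i₀).card := by
        rw [Finset.prod_ite_mem, Finset.univ_inter, Finset.prod_const]
      rw [h2, Finset.card_erase_of_mem (S.min'_mem hne)]
    · intro ε hε
      obtain ⟨hin, hout, htrue⟩ := hmem ε hε
      rw [Finset.mem_coe, Fintype.mem_piFinset]
      intro i
      by_cases h : i ∈ S.erase i₀
      · simp only [h, if_true]
        rcases (ε i).getD true with _ | _ <;> simp
      · simp only [h, if_false, Finset.mem_singleton]
        rcases eq_or_ne i i₀ with rfl | hne'
        · rw [htrue]
          rfl
        · have : i ∉ S := by
            intro hS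
            exact h (Finset.mem_erase.mpr ⟨hne', hS⟩)
          rw [hout i this]
          rfl
    · intro ε hε ε' hε' heq
      obtain ⟨hin, hout, -⟩ := hmem ε hε
      obtain ⟨hin', hout', -⟩ := hmem ε' hε'
      funext i
      by_cases h : i ∈ S
      · obtain ⟨b, hb⟩ := hin i h
        obtain ⟨b', hb'⟩ := hin' i h
        have hgc := congrFun heq i
        dsimp only at hgc
        rw [hb, hb'] at hgc
        simp only [Option.getD_some] at hgc
        rw [hb, hb', hgc]
      · rw [hout i h, hout' i h]

lemma card_C_le (t : ℕ) :
    ((univ.filter fun ε : Fin d → Option Bool => (supp ε).card ≤ t ∧ Canon ε)).card ≤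
      1 + ∑ s ∈ Icc 1 t, 2 ^ (s - 1) * d.choose s := by
  classical
  set C := (univ.filter fun ε : Fin d → Option Bool => (supp ε).card ≤ t ∧ Canon ε) with hC
  set P := (univ : Finset (Fin d)).powerset.filter fun S => S.card ≤ t with hP
  have hmapsto : ∀ ε ∈ C, supp ε ∈ P := by
    intro ε hε
    simp only [hC, Finset.mem_filter, Finset.mem_univ, true_and] at hε
    simp only [hP, Finset.mem_filter, Finset.mem_powerset]
    exact ⟨Finset.subset_univ _, hε.1⟩
  rw [Finset.card_eq_sum_card_fiberwise hmapsto]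
  calc ∑ S ∈ P, (C.filter fun ε => supp ε = S).card
      ≤ ∑ S ∈ P, 2 ^ (S.card - 1) :=
        Finset.sum_le_sum fun S _ => fiber_bound t S
    _ = ∑ n ∈ range (t + 1), ∑ S ∈ P.filter (fun S => S.card = n), 2 ^ (S.card - 1) := by
        rw [Finset.sum_fiberwise_of_maps_to]
        intro S hS
        simp only [hP, Finset.mem_filter] at hS
        rw [Finset.mem_range]
        omega
    _ = ∑ n ∈ range (t + 1), (d.choose n) * 2 ^ (n - 1) := by
        apply Finset.sum_congr rfl
        intro n hn
        have hnt : n ≤ t := by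
          rw [Finset.mem_range] at hn
          omega
        have hfib : P.filter (fun S => S.card = n) = Finset.powersetCard n univ := by
          ext S
          simp only [hP, Finset.mem_filter, Finset.mem_powerset, Finset.mem_powersetCard]
          constructor
          · rintro ⟨⟨hsub, -⟩, hc⟩
            exact ⟨hsub, hc⟩
          · rintro ⟨hsub, hc⟩
            exact ⟨⟨hsub, by omega⟩, hc⟩
        rw [hfib]
        rw [Finset.sum_congr rfl fun S hS => by
          rw [(Finset.mem_powersetCard.mp hS).2]]
        rw [Finset.sum_const, Finset.card_powersetCard, Finset.card_univ, Fintype.card_fin,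
          smul_eq_mul]
    _ = 1 + ∑ s ∈ Icc 1 t, 2 ^ (s - 1) * d.choose s := by
        rw [Finset.sum_range_succ']
        rw [sum_Icc_one (fun s => 2 ^ (s - 1) * d.choose s) t]
        simp only [Nat.choose_zero_right, pow_zero, one_mul, Nat.zero_sub, mul_one]
        rw [add_comm]
        congr 1
        apply Finset.sum_congr rfl
        intro n _
        simp only [Nat.add_sub_cancel]
        ring

lemma exists_perp (C : Finset (Fin d → Option Bool)) (hC : C.card < k) :
    ∃ z : Fin k → ℝ, z ≠ 0 ∧ ∀ ε ∈ C, ∑ v, mu B ε v * z v = 0 := by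
  classical
  let F : (Fin d → Option Bool) → (Fin k → ℝ) →ₗ[ℝ] ℝ := fun ε =>
    ∑ v, mu B ε v • LinearMap.proj v
  let L : (Fin k → ℝ) →ₗ[ℝ] (C → ℝ) := LinearMap.pi fun ε => F ε.1
  have hker : LinearMap.ker L ≠ ⊥ := by
    intro h
    have hInj := LinearMap.ker_eq_bot.mp h
    have h1 := LinearMap.finrank_le_finrank_of_injective hInj
    rw [Module.finrank_pi, Module.finrank_pi, Fintype.card_coe, Fintype.card_fin] at h1
    omega
  obtain ⟨z, hz, hz0⟩ := (Submodule.ne_bot_iff _).mp hker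
  refine ⟨z, hz0, ?_⟩
  intro ε hε
  have hLz : L z = 0 := hz
  have h2 := congrFun (show (L z : C → ℝ) = 0 from hLz) ⟨ε, hε⟩
  simp only [L, F, LinearMap.pi_apply, LinearMap.sum_apply, LinearMap.smul_apply,
    LinearMap.proj_apply, smul_eq_mul, Pi.zero_apply] at h2
  exact h2

end BCCover

theorem card_le_of_bicliqueCover (k t d : ℕ)
    (B : Fin d → Set (Fin k) × Set (Fin k))
    (hB : IsBicliqueCover t (⊤ : SimpleGraph (Fin k)) B) :
    k ≤ 1 + ∑ s ∈ Finset.Icc 1 t, 2 ^ (s - 1) * d.choose s := by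
  classical
  by_contra hk
  push_neg at hk
  obtain ⟨hd, _hadj, hcov⟩ := hB
  set C := (Finset.univ.filter fun ε : Fin d → Option Bool =>
    (BCCover.supp ε).card ≤ t ∧ BCCover.Canon ε) with hCdef
  have hCcard : C.card < k := lt_of_le_of_lt (BCCover.card_C_le t) hk
  obtain ⟨z, hz0, hperp⟩ := BCCover.exists_perp B C hCcard
  obtain ⟨c, hsym, hsupp, hrep⟩ := BCCover.good_prod B hd t
  set P : Fin k → Fin k → ℝ := fun u v =>
    ∏ j ∈ Finset.Icc 1 t, (BCCover.mm B u v - (j : ℝ)) with hPdef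
  -- First way: S = 0
  have hS0 : ∑ u, ∑ v, z u * z v * P u v = 0 := by
    have hstep : ∀ u v : Fin k, z u * z v * P u v =
        ∑ ε : Fin d → Option Bool,
          c ε * ((BCCover.mu B ε u * z u) * (BCCover.mu B (BCCover.cmp ε) v * z v)) := by
      intro u v
      rw [hrep u v, Finset.mul_sum]
      apply Finset.sum_congr rfl
      intro ε _
      unfold BCCover.T
      ring
    calc ∑ u, ∑ v, z u * z v * P u v
        = ∑ u, ∑ v, ∑ ε : Fin d → Option Bool,
            c ε * ((BCCover.mu B ε u * z u) * (BCCover.mu B (BCCover.cmp ε) v * z v)) :=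
          Finset.sum_congr rfl fun u _ => Finset.sum_congr rfl fun v _ => hstep u v
      _ = ∑ u, ∑ ε : Fin d → Option Bool, ∑ v,
            c ε * ((BCCover.mu B ε u * z u) * (BCCover.mu B (BCCover.cmp ε) v * z v)) :=
          Finset.sum_congr rfl fun u _ => Finset.sum_comm
      _ = ∑ ε : Fin d → Option Bool, ∑ u, ∑ v,
            c ε * ((BCCover.mu B ε u * z u) * (BCCover.mu B (BCCover.cmp ε) v * z v)) :=
          Finset.sum_comm
      _ = ∑ ε : Fin d → Option Bool,
            c ε * ((∑ u, BCCover.mu B ε u * z u) *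
                   (∑ v, BCCover.mu B (BCCover.cmp ε) v * z v)) := by
          apply Finset.sum_congr rfl
          intro ε _
          symm
          rw [Finset.sum_mul_sum]
          rw [Finset.mul_sum]
          apply Finset.sum_congr rfl
          intro u _
          rw [Finset.mul_sum]
      _ = 0 := by
          apply Finset.sum_eq_zero
          intro ε _
          by_cases hc : c ε = 0
          · rw [hc]; ring
          · have hwt := hsupp ε hc
            rcases BCCover.canon_or ε with hcan | hcan
            · have hmem : ε ∈ C := by
                rw [hCdef]
                simp only [Finset.mem_filter, Finset.mem_univ, true_and]
                exact ⟨hwt, hcan⟩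
              rw [hperp ε hmem]
              ring
            · have hmem : BCCover.cmp ε ∈ C := by
                rw [hCdef]
                simp only [Finset.mem_filter, Finset.mem_univ, true_and]
                rw [BCCover.supp_cmp]
                exact ⟨hwt, hcan⟩
              rw [hperp _ hmem]
              ring
  -- Second way: S ≠ 0
  have hSne : ∑ u, ∑ v, z u * z v * P u v ≠ 0 := by
    have hPdiag : ∀ u, P u u = ∏ j ∈ Finset.Icc 1 t, (-(j : ℝ)) := by
      intro u
      rw [hPdef]
      apply Finset.prod_congr rfl
      intro j _
      rw [BCCover.mm_self B hd]
      ring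
    have hPoff : ∀ u v : Fin k, u ≠ v → P u v = 0 := by
      intro u v huv
      have hadj : (⊤ : SimpleGraph (Fin k)).Adj u v := by
        rw [SimpleGraph.top_adj]
        exact huv
      obtain ⟨h1, h2⟩ := hcov u v hadj
      set N := Nat.card {i : Fin d // crossAdj (B i).1 (B i).2 u v} with hN
      have hmm : BCCover.mm B u v = (N : ℝ) := by
        rw [BCCover.mm_card B hd u v]
        congr 1
        rw [hN, Nat.card_eq_fintype_card, Fintype.card_subtype]
      apply Finset.prod_eq_zero (Finset.mem_Icc.mpr ⟨h1, h2⟩)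
      rw [hmm]
      exact sub_self _
    have hcompute : ∑ u, ∑ v, z u * z v * P u v =
        (∏ j ∈ Finset.Icc 1 t, (-(j : ℝ))) * ∑ u, z u * z u := by
      rw [Finset.mul_sum]
      apply Finset.sum_congr rfl
      intro u _
      rw [Finset.sum_eq_single u]
      · rw [hPdiag]
        ring
      · intro v _ hvu
        rw [hPoff u v (Ne.symm hvu)]
        ring
      · intro h
        exact absurd (Finset.mem_univ u) h
    rw [hcompute]
    apply mul_ne_zero
    · rw [Finset.prod_ne_zero_iff]
      intro j hj
      have h1 : 1 ≤ j := (Finset.mem_Icc.mp hj).1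
      simp only [neg_ne_zero, Nat.cast_ne_zero]
      omega
    · have hzv : ∃ v, z v ≠ 0 := by
        by_contra h
        push_neg at h
        exact hz0 (funext h)
      obtain ⟨v, hv⟩ := hzv
      have hpos : 0 < ∑ u, z u * z u :=
        Finset.sum_pos' (fun u _ => mul_self_nonneg _)
          ⟨v, Finset.mem_univ v, mul_self_pos.mpr hv⟩
      exact ne_of_gt hpos
  exact hSne hS0
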